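/- In the real-index-zero polyform model of Cl(2ρ, 2σ) on S = ⋀ℂ^{ρ+σ}, the antilinear operators R := Γ₁ ∘ … ∘ Γ_ρ ∘ Γ_{1+2ρ+σ} ∘ … ∘ Γ_{2ρ+2σ} ∘ ∗ and R' := Γ_{ρ+1} ∘ … ∘ Γ_{2ρ} ∘ Γ_{1+2ρ} ∘ … ∘ Γ_{2ρ+σ} ∘ ∗ satisfy R² = (−1)^{(ρ−σ)(ρ−σ−1)/2} · id_S and (R')² = (−1)^{(ρ−σ)(ρ−σ+1)/2} · id_S; in particular the signs depend only on the difference ρ − σ. -/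

import Mathlib

/-- The space of polyforms for the real-index-zero model of `Cl(2ρ, 2σ)`:
the exterior algebra of `ℂ^(ρ+σ)`. -/
noncomputable abbrev ZPolyform (ρ σ : ℕ) := ExteriorAlgebra ℂ (Fin (ρ + σ) → ℂ)

/-- The creation operator `c_k`: wedging with the basis one-form `e_k`. -/
noncomputable def creaZ (ρ σ : ℕ) (k : Fin (ρ + σ)) : Module.End ℂ (ZPolyform ρ σ) :=
  LinearMap.mulLeft ℂ (ExteriorAlgebra.ι ℂ (Pi.single k 1))

/-- The annihilation operator `c_k†`: interior product (left contraction) with the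
`k`-th dual basis vector. -/
noncomputable def anniZ (ρ σ : ℕ) (k : Fin (ρ + σ)) : Module.End ℂ (ZPolyform ρ σ) :=
  CliffordAlgebra.contractLeft (Q := (0 : QuadraticForm ℂ (Fin (ρ + σ) → ℂ)))
    (LinearMap.proj k)

/-- The gamma operators of the real-index-zero model of `Cl(2ρ, 2σ)` (0-indexed):
`Γ_i = a_i + a_i†`, `Γ_{i+ρ} = I•(a_i − a_i†)` for `i < ρ` (with `a_i = c_i`), and
`Γ_{I+2ρ} = I•(ã_I + ã_I†)`, `Γ_{I+2ρ+σ} = ã_I − ã_I†` for `I < σ`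
(with `ã_I = c_{ρ+I}`). -/
noncomputable def GamZ (ρ σ : ℕ) (A : Fin (2 * ρ + 2 * σ)) : Module.End ℂ (ZPolyform ρ σ) :=
  if h1 : (A : ℕ) < ρ then
    creaZ ρ σ ⟨A, by omega⟩ + anniZ ρ σ ⟨A, by omega⟩
  else if h2 : (A : ℕ) < 2 * ρ then
    Complex.I • (creaZ ρ σ ⟨(A : ℕ) - ρ, by omega⟩ - anniZ ρ σ ⟨(A : ℕ) - ρ, by omega⟩)
  else if h3 : (A : ℕ) < 2 * ρ + σ then
    Complex.I • (creaZ ρ σ ⟨(A : ℕ) - ρ, by omega⟩ + anniZ ρ σ ⟨(A : ℕ) - ρ, by omega⟩)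
  else
    creaZ ρ σ ⟨(A : ℕ) - ρ - σ, by have := A.isLt; omega⟩
      - anniZ ρ σ ⟨(A : ℕ) - ρ - σ, by have := A.isLt; omega⟩

/-- The basis polyform `e_{i₁} ∧ ⋯ ∧ e_{i_k}` indexed by a list of indices. -/
noncomputable def basisMonomialZ (ρ σ : ℕ) (l : List (Fin (ρ + σ))) : ZPolyform ρ σ :=
  (l.map fun k => ExteriorAlgebra.ι ℂ (Pi.single k (1 : ℂ))).prod

/-- `st` is the complex conjugation `∗` on polyforms: the `ℂ`-antilinear involution fixing
each basis polyform and conjugating the complex coefficients. -/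
def IsConjugationZ (ρ σ : ℕ) (st : ZPolyform ρ σ → ZPolyform ρ σ) : Prop :=
  (∀ x y, st (x + y) = st x + st y) ∧
  (∀ (z : ℂ) (x : ZPolyform ρ σ), st (z • x) = (starRingEnd ℂ) z • st x) ∧
  (∀ l : List (Fin (ρ + σ)), st (basisMonomialZ ρ σ l) = basisMonomialZ ρ σ l)

/-- The antilinear operator `R := Γ₁ ⋯ Γ_ρ Γ_{1+2ρ+σ} ⋯ Γ_{2ρ+2σ} ∘ ∗`. -/
noncomputable def RopZ (ρ σ : ℕ) (st : ZPolyform ρ σ → ZPolyform ρ σ) :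
    ZPolyform ρ σ → ZPolyform ρ σ :=
  fun ψ =>
    ((((List.finRange ρ).map fun i => GamZ ρ σ ⟨i.1, by have := i.2; omega⟩) ++
      ((List.finRange σ).map fun j =>
        GamZ ρ σ ⟨2 * ρ + σ + j.1, by have := j.2; omega⟩)).prod) (st ψ)

/-- The antilinear operator `R' := Γ_{ρ+1} ⋯ Γ_{2ρ} Γ_{1+2ρ} ⋯ Γ_{2ρ+σ} ∘ ∗`. -/
noncomputable def RopZ' (ρ σ : ℕ) (st : ZPolyform ρ σ → ZPolyform ρ σ) :
    ZPolyform ρ σ → ZPolyform ρ σ :=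
  fun ψ =>
    ((((List.finRange ρ).map fun i => GamZ ρ σ ⟨ρ + i.1, by have := i.2; omega⟩) ++
      ((List.finRange σ).map fun j =>
        GamZ ρ σ ⟨2 * ρ + j.1, by have := j.2; omega⟩)).prod) (st ψ)

variable {ρ σ : ℕ}

lemma crea_crea (j k : Fin (ρ+σ)) : creaZ ρ σ j * creaZ ρ σ k = -(creaZ ρ σ k * creaZ ρ σ j) := by
  refine LinearMap.ext fun x => ?_
  simp only [creaZ, Module.End.mul_apply, LinearMap.mulLeft_apply, LinearMap.neg_apply,
    ← mul_assoc]
  have := ExteriorAlgebra.ι_add_mul_swap (R := ℂ) (Pi.single j (1:ℂ) : Fin (ρ+σ) → ℂ) (Pi.single k 1)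
  rw [eq_neg_of_add_eq_zero_left this, neg_mul]

lemma anni_anni (j k : Fin (ρ+σ)) : anniZ ρ σ j * anniZ ρ σ k = -(anniZ ρ σ k * anniZ ρ σ j) := by
  refine LinearMap.ext fun x => ?_
  simpa [anniZ, Module.End.mul_apply] using
    CliffordAlgebra.contractLeft_comm (Q := (0 : QuadraticForm ℂ (Fin (ρ + σ) → ℂ)))
      (LinearMap.proj j) (LinearMap.proj k) x

lemma crea_sq (k : Fin (ρ+σ)) : creaZ ρ σ k * creaZ ρ σ k = 0 := by
  refine LinearMap.ext fun x => ?_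
  simp [creaZ, Module.End.mul_apply, ← mul_assoc, ExteriorAlgebra.ι_sq_zero]

lemma anni_sq (k : Fin (ρ+σ)) : anniZ ρ σ k * anniZ ρ σ k = 0 := by
  refine LinearMap.ext fun x => ?_
  simpa [anniZ, Module.End.mul_apply] using
    CliffordAlgebra.contractLeft_contractLeft (Q := (0 : QuadraticForm ℂ (Fin (ρ + σ) → ℂ)))
      (LinearMap.proj k) x

lemma anni_crea (j k : Fin (ρ+σ)) :
    anniZ ρ σ j * creaZ ρ σ k = (if j = k then (1:ℂ) else 0) • 1 - creaZ ρ σ k * anniZ ρ σ j := by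
  refine LinearMap.ext fun x => ?_
  have := CliffordAlgebra.contractLeft_ι_mul (Q := (0 : QuadraticForm ℂ (Fin (ρ + σ) → ℂ)))
    (d := LinearMap.proj j) (Pi.single k (1:ℂ)) x
  simp only [anniZ, creaZ, Module.End.mul_apply, LinearMap.mulLeft_apply, LinearMap.sub_apply,
    LinearMap.smul_apply, Module.End.one_apply] at this ⊢
  rw [this]
  congr 2
  simp [LinearMap.proj, Pi.single_apply]

/-- A mixed creation/annihilation operator. -/
noncomputable def mixZ (ρ σ : ℕ) (u v : ℂ) (k : Fin (ρ+σ)) : Module.End ℂ (ZPolyform ρ σ) :=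
  u • creaZ ρ σ k + v • anniZ ρ σ k

lemma anni_crea_ne {j k : Fin (ρ+σ)} (h : j ≠ k) :
    anniZ ρ σ j * creaZ ρ σ k = -(creaZ ρ σ k * anniZ ρ σ j) := by
  rw [anni_crea, if_neg h, zero_smul, zero_sub]

lemma mix_anticomm (u v u' v' : ℂ) {j k : Fin (ρ+σ)} (h : j ≠ k) :
    mixZ ρ σ u v j * mixZ ρ σ u' v' k = -(mixZ ρ σ u' v' k * mixZ ρ σ u v j) := by
  simp only [mixZ, add_mul, mul_add, smul_mul_assoc, mul_smul_comm,
    crea_crea j k, anni_anni j k, anni_crea_ne h, anni_crea_ne h.symm, smul_neg, smul_add,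
    smul_smul, neg_smul, neg_add_rev, neg_neg]
  module

lemma mix_sq (u v : ℂ) (k : Fin (ρ+σ)) :
    mixZ ρ σ u v k * mixZ ρ σ u v k = (u * v) • 1 := by
  simp only [mixZ, add_mul, mul_add, smul_mul_assoc, mul_smul_comm,
    crea_sq k, anni_sq k, anni_crea k k, if_pos rfl, if_true, smul_zero, smul_sub, smul_smul,
    smul_add, mul_one, zero_add, add_zero]
  module

section ProdLemmas
variable {A : Type*} [Ring A] [Algebra ℂ A]

lemma prod_mul_single (x : A) (L : List A) (h : ∀ y ∈ L, y * x = -(x * y)) :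
    L.prod * x = ((-1:ℂ) ^ L.length) • (x * L.prod) := by
  induction L with
  | nil => simp
  | cons a L ih =>
    have ha := h a List.mem_cons_self
    have hL : ∀ y ∈ L, y * x = -(x * y) := fun y hy => h y (List.mem_cons_of_mem a hy)
    rw [List.prod_cons, mul_assoc, ih hL, mul_smul_comm, ← mul_assoc, ha, List.length_cons,
      neg_mul, smul_neg, pow_succ, mul_smul, neg_one_smul, smul_neg, mul_assoc]

lemma prod_sq (L : List (A × ℂ)) (hsq : ∀ p ∈ L, p.1 * p.1 = p.2 • 1)
    (hanti : L.Pairwise fun p q => p.1 * q.1 = -(q.1 * p.1)) :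
    (L.map Prod.fst).prod * (L.map Prod.fst).prod
      = ((-1:ℂ) ^ (L.length.choose 2) * (L.map Prod.snd).prod) • 1 := by
  induction L with
  | nil => simp
  | cons p L ih =>
    rw [List.pairwise_cons] at hanti
    have hPx : (L.map Prod.fst).prod * p.1
        = ((-1:ℂ) ^ L.length) • (p.1 * (L.map Prod.fst).prod) := by
      have := prod_mul_single p.1 (L.map Prod.fst) (fun y hy => by
        obtain ⟨q, hq, rfl⟩ := List.mem_map.mp hy
        rw [hanti.1 q hq, neg_neg])
      simpa using this
    have ihL := ih (fun q hq => hsq q (List.mem_cons_of_mem p hq)) hanti.2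
    have hp := hsq p List.mem_cons_self
    rw [List.map_cons, List.prod_cons, List.map_cons, List.prod_cons, mul_assoc,
      ← mul_assoc (L.map Prod.fst).prod, hPx, smul_mul_assoc, mul_smul_comm]
    rw [show p.1 * (p.1 * (L.map Prod.fst).prod * (L.map Prod.fst).prod)
        = (p.1 * p.1) * ((L.map Prod.fst).prod * (L.map Prod.fst).prod) by
      noncomm_ring, hp, ihL, smul_mul_assoc, one_mul]
    rw [List.length_cons, Nat.choose_succ_succ, Nat.choose_one_right, smul_smul, smul_smul]
    congr 1
    ring

end ProdLemmas


/-! ## Span machinery -/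

noncomputable def realSpanZ (ρ σ : ℕ) : Submodule ℝ (ZPolyform ρ σ) :=
  Submodule.span ℝ (Set.range (basisMonomialZ ρ σ))

lemma basisMonomialZ_mem (l : List (Fin (ρ+σ))) : basisMonomialZ ρ σ l ∈ realSpanZ ρ σ :=
  Submodule.subset_span ⟨l, rfl⟩

lemma crea_monomial (k : Fin (ρ+σ)) (l : List (Fin (ρ+σ))) :
    creaZ ρ σ k (basisMonomialZ ρ σ l) = basisMonomialZ ρ σ (k :: l) := by
  simp [creaZ, basisMonomialZ]

lemma crea_mem_realSpan (k : Fin (ρ+σ)) {x : ZPolyform ρ σ} (hx : x ∈ realSpanZ ρ σ) :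
    creaZ ρ σ k x ∈ realSpanZ ρ σ := by
  have hle : realSpanZ ρ σ ≤ (realSpanZ ρ σ).comap ((creaZ ρ σ k).restrictScalars ℝ) := by
    rw [realSpanZ, Submodule.span_le]
    rintro _ ⟨l, rfl⟩
    simpa [crea_monomial, realSpanZ] using basisMonomialZ_mem (k :: l)
  exact hle hx

lemma anni_monomial_mem (k : Fin (ρ+σ)) (l : List (Fin (ρ+σ))) :
    anniZ ρ σ k (basisMonomialZ ρ σ l) ∈ realSpanZ ρ σ := by
  induction l with
  | nil =>
    have : basisMonomialZ ρ σ [] = 1 := by simp [basisMonomialZ]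
    rw [this]
    simp only [anniZ]
    rw [CliffordAlgebra.contractLeft_one]
    exact zero_mem _
  | cons j l ih =>
    have hstep : basisMonomialZ ρ σ (j :: l)
        = ExteriorAlgebra.ι ℂ (Pi.single j 1) * basisMonomialZ ρ σ l := by
      simp [basisMonomialZ]
    rw [hstep]
    simp only [anniZ]
    rw [CliffordAlgebra.contractLeft_ι_mul]
    refine sub_mem ?_ ?_
    · have : (LinearMap.proj k : (Fin (ρ+σ) → ℂ) →ₗ[ℂ] ℂ) (Pi.single j 1)
          = if k = j then 1 else 0 := by simp [LinearMap.proj, Pi.single_apply]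
      rw [this]
      by_cases h : k = j
      · rw [if_pos h, one_smul]; exact basisMonomialZ_mem l
      · rw [if_neg h, zero_smul]; exact zero_mem _
    · exact crea_mem_realSpan j ih

lemma anni_mem_realSpan (k : Fin (ρ+σ)) {x : ZPolyform ρ σ} (hx : x ∈ realSpanZ ρ σ) :
    anniZ ρ σ k x ∈ realSpanZ ρ σ := by
  have hle : realSpanZ ρ σ ≤ (realSpanZ ρ σ).comap ((anniZ ρ σ k).restrictScalars ℝ) := by
    rw [realSpanZ, Submodule.span_le]
    rintro _ ⟨l, rfl⟩
    exact anni_monomial_mem k l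
  exact hle hx

lemma spanC_top : Submodule.span ℂ (Set.range (basisMonomialZ ρ σ)) = ⊤ := by
  rw [eq_top_iff]
  intro a ha
  clear ha
  induction a using CliffordAlgebra.induction with
  | algebraMap r =>
    have h1 : (basisMonomialZ ρ σ []) = 1 := by simp [basisMonomialZ]
    have : algebraMap ℂ (ZPolyform ρ σ) r = r • basisMonomialZ ρ σ [] := by
      rw [h1, Algebra.algebraMap_eq_smul_one]
    rw [this]
    exact Submodule.smul_mem _ _ (Submodule.subset_span ⟨[], rfl⟩)
  | ι v =>
    have hv : v = ∑ k : Fin (ρ+σ), v k • (Pi.single k (1:ℂ) : Fin (ρ+σ) → ℂ) := by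
      funext j
      simp [Pi.single_apply, Finset.sum_apply, mul_comm]
    rw [show (ExteriorAlgebra.ι ℂ) v = CliffordAlgebra.ι _ v from rfl, hv, map_sum]
    refine Submodule.sum_mem _ fun k _ => ?_
    rw [map_smul]
    refine Submodule.smul_mem _ _ (Submodule.subset_span ⟨[k], ?_⟩)
    simp [basisMonomialZ]
  | mul x y hx hy =>
    have hmul : Submodule.span ℂ (Set.range (basisMonomialZ ρ σ)) *
        Submodule.span ℂ (Set.range (basisMonomialZ ρ σ))
        ≤ Submodule.span ℂ (Set.range (basisMonomialZ ρ σ)) := by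
      rw [Submodule.span_mul_span]
      refine Submodule.span_le.mpr ?_
      rintro _ ⟨_, ⟨l₁, rfl⟩, _, ⟨l₂, rfl⟩, rfl⟩
      refine Submodule.subset_span ⟨l₁ ++ l₂, ?_⟩
      simp [basisMonomialZ]
    exact hmul (Submodule.mul_mem_mul hx hy)
  | add x y hx hy => exact Submodule.add_mem _ hx hy

/-! ## Conjugation machinery -/

section Conj
variable {st : ZPolyform ρ σ → ZPolyform ρ σ} (hst : IsConjugationZ ρ σ st)
include hst

lemma st_zero : st 0 = 0 := by
  have h := hst.1 0 0
  rw [add_zero] at h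
  have := congrArg (fun y => y - st 0) h
  simpa using this.symm

lemma st_fix_real {x : ZPolyform ρ σ} (hx : x ∈ realSpanZ ρ σ) : st x = x := by
  induction hx using Submodule.span_induction with
  | mem m hm => obtain ⟨l, rfl⟩ := hm; exact hst.2.2 l
  | zero => exact st_zero hst
  | add x y _ _ hx hy => rw [hst.1 x y, hx, hy]
  | smul r x _ hx =>
    rw [← algebraMap_smul ℂ r x, hst.2.1, hx]
    congr 1
    simp [Complex.conj_ofReal]

lemma st_st (x : ZPolyform ρ σ) : st (st x) = x := by
  have hx : x ∈ Submodule.span ℂ (Set.range (basisMonomialZ ρ σ)) := by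
    rw [spanC_top]; trivial
  induction hx using Submodule.span_induction with
  | mem m hm => obtain ⟨l, rfl⟩ := hm; rw [hst.2.2 l, hst.2.2 l]
  | zero => rw [st_zero hst, st_zero hst]
  | add x y _ _ hx hy => rw [hst.1, hst.1, hx, hy]
  | smul z x _ hx => rw [hst.2.1, hst.2.1, hx, Complex.conj_conj]

lemma st_comm_real {T : Module.End ℂ (ZPolyform ρ σ)}
    (hT : ∀ y ∈ realSpanZ ρ σ, T y ∈ realSpanZ ρ σ) (x : ZPolyform ρ σ) :
    st (T x) = T (st x) := by
  have hx : x ∈ Submodule.span ℂ (Set.range (basisMonomialZ ρ σ)) := by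
    rw [spanC_top]; trivial
  induction hx using Submodule.span_induction with
  | mem m hm =>
    obtain ⟨l, rfl⟩ := hm
    rw [hst.2.2 l, st_fix_real hst (hT _ (basisMonomialZ_mem l))]
  | zero => rw [map_zero, st_zero hst, map_zero]
  | add x y _ _ hx hy => rw [map_add, hst.1, hst.1, hx, hy, map_add]
  | smul z x _ hx => rw [map_smul, hst.2.1, hst.2.1, hx, map_smul]

end Conj

lemma mix_real_mem (u v : ℝ) (k : Fin (ρ+σ)) {x : ZPolyform ρ σ} (hx : x ∈ realSpanZ ρ σ) :
    mixZ ρ σ (u:ℂ) (v:ℂ) k x ∈ realSpanZ ρ σ := by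
  simp only [mixZ, LinearMap.add_apply, LinearMap.smul_apply]
  refine add_mem ?_ ?_
  · have h1 : ((u:ℂ)) • (creaZ ρ σ k x) = u • (creaZ ρ σ k x) := algebraMap_smul ℂ u _
    rw [h1]
    exact Submodule.smul_mem _ _ (crea_mem_realSpan k hx)
  · have h1 : ((v:ℂ)) • (anniZ ρ σ k x) = v • (anniZ ρ σ k x) := algebraMap_smul ℂ v _
    rw [h1]
    exact Submodule.smul_mem _ _ (anni_mem_realSpan k hx)

lemma prod_preserves (L : List (Module.End ℂ (ZPolyform ρ σ)))
    (h : ∀ T ∈ L, ∀ y ∈ realSpanZ ρ σ, T y ∈ realSpanZ ρ σ) :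
    ∀ y ∈ realSpanZ ρ σ, L.prod y ∈ realSpanZ ρ σ := by
  induction L with
  | nil => intro y hy; simpa using hy
  | cons T L ih =>
    intro y hy
    rw [List.prod_cons, Module.End.mul_apply]
    exact h T List.mem_cons_self _
      (ih (fun S hS => h S (List.mem_cons_of_mem T hS)) y hy)

section Conj2
variable {st : ZPolyform ρ σ → ZPolyform ρ σ} (hst : IsConjugationZ ρ σ st)
include hst

omit hst in
lemma st_prod_sign (c : ℂ) (L : List (Module.End ℂ (ZPolyform ρ σ)))
    (h : ∀ T ∈ L, ∀ x, st (T x) = c • T (st x)) (x : ZPolyform ρ σ) :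
    st (L.prod x) = c ^ L.length • L.prod (st x) := by
  induction L generalizing x with
  | nil => simp
  | cons T L ih =>
    rw [List.prod_cons, Module.End.mul_apply, h T List.mem_cons_self,
      ih (fun S hS => h S (List.mem_cons_of_mem T hS)), map_smul, List.length_cons, pow_succ,
      Module.End.mul_apply, smul_smul, mul_comm]

lemma st_comm_imag {T : Module.End ℂ (ZPolyform ρ σ)}
    (hT : ∀ y ∈ realSpanZ ρ σ, T y ∈ realSpanZ ρ σ) (x : ZPolyform ρ σ) :
    st ((Complex.I • T) x) = (-1 : ℂ) • (Complex.I • T) (st x) := by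
  rw [LinearMap.smul_apply, hst.2.1, st_comm_real hst hT, LinearMap.smul_apply,
    smul_smul, Complex.conj_I, neg_one_mul, neg_smul]

end Conj2

/-! ## GamZ in mixed form -/

lemma GamZ_first (i : ℕ) (h : i < ρ) (hA : i < 2*ρ+2*σ) (hk : i < ρ+σ) :
    GamZ ρ σ ⟨i, hA⟩ = mixZ ρ σ 1 1 ⟨i, hk⟩ := by
  rw [GamZ, dif_pos (show ((⟨i, hA⟩ : Fin (2*ρ+2*σ)) : ℕ) < ρ from h), mixZ, one_smul, one_smul]

lemma GamZ_second (i : ℕ) (h : i < ρ) (hA : ρ + i < 2*ρ+2*σ) (hk : i < ρ+σ) :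
    GamZ ρ σ ⟨ρ + i, hA⟩ = mixZ ρ σ Complex.I (-Complex.I) ⟨i, hk⟩ := by
  rw [GamZ, dif_neg (by simp only [Fin.val_mk]; omega), dif_pos (by simp only [Fin.val_mk]; omega), mixZ]
  have : ρ + i - ρ = i := by omega
  simp only [this]
  rw [smul_sub, sub_eq_add_neg]; simp; exact (neg_smul Complex.I _).symm

lemma GamZ_third (j : ℕ) (h : j < σ) (hA : 2*ρ + j < 2*ρ+2*σ) (hk : ρ + j < ρ+σ) :
    GamZ ρ σ ⟨2*ρ + j, hA⟩ = mixZ ρ σ Complex.I Complex.I ⟨ρ + j, hk⟩ := by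
  rw [GamZ, dif_neg (by simp only [Fin.val_mk]; omega), dif_neg (by simp only [Fin.val_mk]; omega), dif_pos (by simp only [Fin.val_mk]; omega), mixZ]
  have : 2*ρ + j - ρ = ρ + j := by omega
  simp only [this]
  rw [smul_add]

lemma GamZ_fourth (j : ℕ) (h : j < σ) (hA : 2*ρ + σ + j < 2*ρ+2*σ) (hk : ρ + j < ρ+σ) :
    GamZ ρ σ ⟨2*ρ + σ + j, hA⟩ = mixZ ρ σ 1 (-1) ⟨ρ + j, hk⟩ := by
  rw [GamZ, dif_neg (by simp only [Fin.val_mk]; omega), dif_neg (by simp only [Fin.val_mk]; omega), dif_neg (by simp only [Fin.val_mk]; omega), mixZ]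
  have : 2*ρ + σ + j - ρ - σ = ρ + j := by omega
  simp only [this]
  rw [one_smul]; simp [sub_eq_add_neg]; exact (neg_one_smul ℂ _).symm

/-! ## The paired lists -/

noncomputable def pairListR (ρ σ : ℕ) : List (Module.End ℂ (ZPolyform ρ σ) × ℂ) :=
  ((List.finRange ρ).map fun i => (mixZ ρ σ 1 1 ⟨i.1, by have := i.2; omega⟩, (1:ℂ))) ++
  ((List.finRange σ).map fun j => (mixZ ρ σ 1 (-1) ⟨ρ + j.1, by have := j.2; omega⟩, (-1:ℂ)))

noncomputable def pairListR' (ρ σ : ℕ) : List (Module.End ℂ (ZPolyform ρ σ) × ℂ) :=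
  ((List.finRange ρ).map fun i =>
      (mixZ ρ σ Complex.I (-Complex.I) ⟨i.1, by have := i.2; omega⟩, (1:ℂ))) ++
  ((List.finRange σ).map fun j =>
      (mixZ ρ σ Complex.I Complex.I ⟨ρ + j.1, by have := j.2; omega⟩, (-1:ℂ)))

lemma pairListR_fst :
    (pairListR ρ σ).map Prod.fst =
      (((List.finRange ρ).map fun i => GamZ ρ σ ⟨i.1, by have := i.2; omega⟩) ++
        ((List.finRange σ).map fun j =>
          GamZ ρ σ ⟨2 * ρ + σ + j.1, by have := j.2; omega⟩)) := by
  rw [pairListR, List.map_append, List.map_map, List.map_map]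
  congr 1
  · refine List.map_congr_left fun i _ => ?_
    exact (GamZ_first i.1 i.2 (by omega) (by have := i.2; omega)).symm
  · refine List.map_congr_left fun j _ => ?_
    exact (GamZ_fourth j.1 j.2 (by have := j.2; omega) (by have := j.2; omega)).symm

lemma pairListR'_fst :
    (pairListR' ρ σ).map Prod.fst =
      (((List.finRange ρ).map fun i => GamZ ρ σ ⟨ρ + i.1, by have := i.2; omega⟩) ++
        ((List.finRange σ).map fun j =>
          GamZ ρ σ ⟨2 * ρ + j.1, by have := j.2; omega⟩)) := by
  rw [pairListR', List.map_append, List.map_map, List.map_map]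
  congr 1
  · refine List.map_congr_left fun i _ => ?_
    exact (GamZ_second i.1 i.2 (by have := i.2; omega) (by have := i.2; omega)).symm
  · refine List.map_congr_left fun j _ => ?_
    exact (GamZ_third j.1 j.2 (by have := j.2; omega) (by have := j.2; omega)).symm

lemma pairListR_len : (pairListR ρ σ).length = ρ + σ := by simp [pairListR]

lemma pairListR'_len : (pairListR' ρ σ).length = ρ + σ := by simp [pairListR']

lemma pairListR_snd : ((pairListR ρ σ).map Prod.snd).prod = (-1:ℂ)^σ := by
  rw [pairListR, List.map_append, List.map_map, List.map_map, List.prod_append]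
  simp only [Function.comp_def, List.map_const', List.length_finRange, List.prod_replicate,
    one_pow, one_mul]

lemma pairListR'_snd : ((pairListR' ρ σ).map Prod.snd).prod = (-1:ℂ)^σ := by
  rw [pairListR', List.map_append, List.map_map, List.map_map, List.prod_append]
  simp only [Function.comp_def, List.map_const', List.length_finRange, List.prod_replicate,
    one_pow, one_mul]

lemma pairListR_sq : ∀ p ∈ pairListR ρ σ, p.1 * p.1 = p.2 • 1 := by
  intro p hp
  rw [pairListR, List.mem_append] at hp
  rcases hp with hp | hp <;> obtain ⟨i, _, rfl⟩ := List.mem_map.mp hp <;>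
    simp [mix_sq]

lemma pairListR'_sq : ∀ p ∈ pairListR' ρ σ, p.1 * p.1 = p.2 • 1 := by
  intro p hp
  rw [pairListR', List.mem_append] at hp
  rcases hp with hp | hp <;> obtain ⟨i, _, rfl⟩ := List.mem_map.mp hp <;>
    simp [mix_sq, Complex.I_mul_I]

lemma pairListR_pairwise :
    (pairListR ρ σ).Pairwise (fun p q => p.1 * q.1 = -(q.1 * p.1)) := by
  rw [pairListR, List.pairwise_append]
  refine ⟨?_, ?_, ?_⟩
  · rw [List.pairwise_map]
    refine (List.pairwise_lt_finRange ρ).imp ?_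
    intro i i' hlt
    have hv : i.1 < i'.1 := hlt
    exact mix_anticomm _ _ _ _ (by simp only [ne_eq, Fin.mk.injEq]; omega)
  · rw [List.pairwise_map]
    refine (List.pairwise_lt_finRange σ).imp ?_
    intro j j' hlt
    have hv : j.1 < j'.1 := hlt
    exact mix_anticomm _ _ _ _ (by simp only [ne_eq, Fin.mk.injEq]; omega)
  · intro a ha b hb
    obtain ⟨i, _, rfl⟩ := List.mem_map.mp ha
    obtain ⟨j, _, rfl⟩ := List.mem_map.mp hb
    have hv : i.1 < ρ := i.2
    exact mix_anticomm _ _ _ _ (by simp only [ne_eq, Fin.mk.injEq]; omega)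

lemma pairListR'_pairwise :
    (pairListR' ρ σ).Pairwise (fun p q => p.1 * q.1 = -(q.1 * p.1)) := by
  rw [pairListR', List.pairwise_append]
  refine ⟨?_, ?_, ?_⟩
  · rw [List.pairwise_map]
    refine (List.pairwise_lt_finRange ρ).imp ?_
    intro i i' hlt
    have hv : i.1 < i'.1 := hlt
    exact mix_anticomm _ _ _ _ (by simp only [ne_eq, Fin.mk.injEq]; omega)
  · rw [List.pairwise_map]
    refine (List.pairwise_lt_finRange σ).imp ?_
    intro j j' hlt
    have hv : j.1 < j'.1 := hlt
    exact mix_anticomm _ _ _ _ (by simp only [ne_eq, Fin.mk.injEq]; omega)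
  · intro a ha b hb
    obtain ⟨i, _, rfl⟩ := List.mem_map.mp ha
    obtain ⟨j, _, rfl⟩ := List.mem_map.mp hb
    have hv : i.1 < ρ := i.2
    exact mix_anticomm _ _ _ _ (by simp only [ne_eq, Fin.mk.injEq]; omega)

/-! ## Preservation and conjugation facts about the lists -/

lemma pairListR_preserves :
    ∀ T ∈ (pairListR ρ σ).map Prod.fst, ∀ y ∈ realSpanZ ρ σ, T y ∈ realSpanZ ρ σ := by
  intro T hT y hy
  rw [pairListR, List.map_append, List.map_map, List.map_map, List.mem_append] at hT
  rcases hT with hT | hT <;> obtain ⟨i, _, rfl⟩ := List.mem_map.mp hT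
  · simpa using mix_real_mem 1 1 _ hy
  · simpa using mix_real_mem 1 (-1) _ hy

lemma mix_I_eq (v : ℝ) (k : Fin (ρ+σ)) :
    mixZ ρ σ Complex.I ((v:ℂ) * Complex.I) k = Complex.I • mixZ ρ σ 1 (v:ℂ) k := by
  rw [mixZ, mixZ, smul_add, smul_smul, smul_smul, mul_one, mul_comm]

lemma pairListR'_st {st : ZPolyform ρ σ → ZPolyform ρ σ} (hst : IsConjugationZ ρ σ st) :
    ∀ T ∈ (pairListR' ρ σ).map Prod.fst, ∀ x, st (T x) = (-1:ℂ) • T (st x) := by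
  intro T hT x
  rw [pairListR', List.map_append, List.map_map, List.map_map, List.mem_append] at hT
  rcases hT with hT | hT <;> obtain ⟨i, _, rfl⟩ := List.mem_map.mp hT
  · have h1 : (Prod.fst ∘ fun i : Fin ρ =>
        (mixZ ρ σ Complex.I (-Complex.I) (⟨i.1, by have := i.2; omega⟩ : Fin (ρ+σ)), (1:ℂ))) i
        = Complex.I • mixZ ρ σ 1 ((-1:ℝ):ℂ) ⟨i.1, by have := i.2; omega⟩ := by
      have := mix_I_eq (ρ := ρ) (σ := σ) (-1) ⟨i.1, by have := i.2; omega⟩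
      simp only [Function.comp_apply]
      rw [← this]
      norm_num
    rw [h1]
    exact st_comm_imag hst (fun y hy => by simpa using mix_real_mem 1 (-1) _ hy) x
  · have h1 : (Prod.fst ∘ fun j : Fin σ =>
        (mixZ ρ σ Complex.I Complex.I (⟨ρ + j.1, by have := j.2; omega⟩ : Fin (ρ+σ)), (-1:ℂ))) i
        = Complex.I • mixZ ρ σ 1 ((1:ℝ):ℂ) ⟨ρ + i.1, by have := i.2; omega⟩ := by
      have := mix_I_eq (ρ := ρ) (σ := σ) 1 ⟨ρ + i.1, by have := i.2; omega⟩
      simp only [Function.comp_apply]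
      rw [← this]
      norm_num
    rw [h1]
    exact st_comm_imag hst (fun y hy => by simpa using mix_real_mem 1 1 _ hy) x

/-! ## Arithmetic -/

lemma two_mul_choose_two (n : ℕ) : 2 * n.choose 2 = n * (n - 1) := by
  induction n with
  | zero => rfl
  | succ m ih =>
    rw [Nat.choose_succ_succ, Nat.choose_one_right, Nat.mul_add, ih, Nat.add_sub_cancel]
    cases m with
    | zero => rfl
    | succ k => rw [Nat.succ_sub_one]; ring

lemma negOne_zpow_eq (e : ℤ) (t : ℕ) (c : ℤ) (h : e = (t:ℤ) + 2*c) :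
    (-1:ℂ)^e = (-1:ℂ)^t := by
  rw [h, zpow_add₀ (by norm_num : (-1:ℂ) ≠ 0), zpow_natCast]
  have h2 : ((-1:ℂ))^(2*c) = (((-1:ℂ)^(2:ℤ))^c) := by rw [← zpow_mul]
  rw [h2]
  norm_num

lemma signR_eq (hρσ : 1 ≤ ρ + σ) :
    ((-1 : ℂ) ^ ((((ρ : ℤ) - σ) * ((ρ : ℤ) - σ - 1)) / 2))
      = (-1:ℂ)^((ρ+σ).choose 2) * (-1:ℂ)^σ := by
  rw [← pow_add]
  refine negOne_zpow_eq _ ((ρ+σ).choose 2 + σ) (-((ρ:ℤ)*σ)) ?_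
  have hch := two_mul_choose_two (ρ+σ)
  have hch' : 2 * (((ρ+σ).choose 2 : ℕ) : ℤ) = ((ρ:ℤ)+σ) * (((ρ:ℤ)+σ) - 1) := by
    have h := congrArg (Nat.cast : ℕ → ℤ) hch
    push_cast [Nat.cast_sub hρσ] at h
    linarith
  obtain ⟨m, hm⟩ := Int.even_mul_succ_self ((ρ:ℤ) - σ - 1)
  have hm' : ((ρ:ℤ) - σ) * ((ρ:ℤ) - σ - 1) = m + m := by linear_combination hm
  have he : (((ρ:ℤ) - σ) * ((ρ:ℤ) - σ - 1)) / 2 = m := by rw [hm']; omega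
  rw [he]
  have hring : ((ρ:ℤ) - σ) * ((ρ:ℤ) - σ - 1)
      = ((ρ:ℤ)+σ) * (((ρ:ℤ)+σ) - 1) + 2*σ - 4*((ρ:ℤ)*σ) := by ring
  push_cast
  linarith [hm', hch', hring]

lemma signR'_eq (hρσ : 1 ≤ ρ + σ) :
    ((-1 : ℂ) ^ ((((ρ : ℤ) - σ) * ((ρ : ℤ) - σ + 1)) / 2))
      = (-1:ℂ)^(ρ+σ) * ((-1:ℂ)^((ρ+σ).choose 2) * (-1:ℂ)^σ) := by
  rw [← pow_add, ← pow_add]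
  refine negOne_zpow_eq _ ((ρ+σ) + ((ρ+σ).choose 2 + σ)) (-((ρ:ℤ)*σ) - σ) ?_
  have hch := two_mul_choose_two (ρ+σ)
  have hch' : 2 * (((ρ+σ).choose 2 : ℕ) : ℤ) = ((ρ:ℤ)+σ) * (((ρ:ℤ)+σ) - 1) := by
    have h := congrArg (Nat.cast : ℕ → ℤ) hch
    push_cast [Nat.cast_sub hρσ] at h
    linarith
  obtain ⟨m, hm⟩ := Int.even_mul_succ_self ((ρ:ℤ) - σ)
  have hm' : ((ρ:ℤ) - σ) * ((ρ:ℤ) - σ + 1) = m + m := by linear_combination hm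
  have he : (((ρ:ℤ) - σ) * ((ρ:ℤ) - σ + 1)) / 2 = m := by rw [hm']; omega
  rw [he]
  have hring : ((ρ:ℤ) - σ) * ((ρ:ℤ) - σ + 1)
      = ((ρ:ℤ)+σ) * (((ρ:ℤ)+σ) - 1) + 2*((ρ:ℤ)+σ) + 2*σ - 4*((ρ:ℤ)*σ) - 4*σ := by ring
  push_cast
  linarith [hm', hch', hring]


/-- `R² = (−1)^{(ρ−σ)(ρ−σ−1)/2} id` and `(R')² = (−1)^{(ρ−σ)(ρ−σ+1)/2} id`;
in particular the signs depend only on the difference `ρ − σ`. -/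
theorem RopZ_RopZ'_sq (ρ σ : ℕ) (hρσ : 1 ≤ ρ + σ)
    (st : ZPolyform ρ σ → ZPolyform ρ σ) (hst : IsConjugationZ ρ σ st) (ψ : ZPolyform ρ σ) :
    RopZ ρ σ st (RopZ ρ σ st ψ)
      = ((-1 : ℂ) ^ ((((ρ : ℤ) - σ) * ((ρ : ℤ) - σ - 1)) / 2)) • ψ ∧
    RopZ' ρ σ st (RopZ' ρ σ st ψ)
      = ((-1 : ℂ) ^ ((((ρ : ℤ) - σ) * ((ρ : ℤ) - σ + 1)) / 2)) • ψ := by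
  constructor
  · simp only [RopZ, ← pairListR_fst]
    set P := ((pairListR ρ σ).map Prod.fst).prod with hP
    have hpres : ∀ y ∈ realSpanZ ρ σ, P y ∈ realSpanZ ρ σ :=
      prod_preserves _ pairListR_preserves
    have hcomm : ∀ x, st (P x) = P (st x) := fun x => st_comm_real hst hpres x
    rw [hcomm, st_st hst]
    have hsq := prod_sq (pairListR ρ σ) pairListR_sq pairListR_pairwise
    rw [pairListR_len, pairListR_snd] at hsq
    have : P (P ψ) = (P * P) ψ := rfl
    rw [this, hsq, LinearMap.smul_apply, Module.End.one_apply, signR_eq hρσ]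
  · simp only [RopZ', ← pairListR'_fst]
    set P := ((pairListR' ρ σ).map Prod.fst).prod with hP
    have hcomm : ∀ x, st (P x)
        = ((-1:ℂ) ^ ((pairListR' ρ σ).map Prod.fst).length) • P (st x) :=
      fun x => st_prod_sign (-1) _ (pairListR'_st hst) x
    rw [hcomm, st_st hst, map_smul]
    have hsq := prod_sq (pairListR' ρ σ) pairListR'_sq pairListR'_pairwise
    rw [pairListR'_len, pairListR'_snd] at hsq
    have hlen : ((pairListR' ρ σ).map Prod.fst).length = ρ + σ := by
      rw [List.length_map, pairListR'_len]
    have : P (P ψ) = (P * P) ψ := rfl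
    rw [hlen, this, hsq, LinearMap.smul_apply, Module.End.one_apply, smul_smul, signR'_eq hρσ]
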